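/- For every natural number n ≥ 1, the following identity of polynomials in ℚ[x] holds: H_0(n−1, x)·H_0(n+1, x) = H_0(n, x)·H_2(n, x) + H_0(n, x)·H_{1²}(n, x) − H_1(n, x)². -/

import Mathlib

open Polynomial

/-- `a k` is the polynomial `∑_{m=0}^{k} C(2k+2-m, k-m) xᵐ`. -/
noncomputable def a (k : ℕ) : ℚ[X] :=
  ∑ m ∈ Finset.range (k + 1), C (((2 * k + 2 - m).choose (k - m) : ℚ)) * X ^ m

/-- `H0 n` is the `(n+1)×(n+1)` Hankel determinant of the polynomials `a`. -/
noncomputable def H0 (n : ℕ) : ℚ[X] :=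
  (Matrix.of fun i j : Fin (n + 1) => a (i.val + j.val)).det

/-- `H1 n`: the last column entries `a_{i+n}` are replaced by `a_{i+n+1}`. -/
noncomputable def H1 (n : ℕ) : ℚ[X] :=
  (Matrix.of fun i j : Fin (n + 1) =>
    if j.val = n then a (i.val + n + 1) else a (i.val + j.val)).det

/-- `H2 n`: the last column entries `a_{i+n}` are replaced by `a_{i+n+2}`. -/
noncomputable def H2 (n : ℕ) : ℚ[X] :=
  (Matrix.of fun i j : Fin (n + 1) =>
    if j.val = n then a (i.val + n + 2) else a (i.val + j.val)).det

/-- `H11 n`: column `n-1` is replaced by `a_{i+n}` and column `n` by `a_{i+n+1}`. -/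
noncomputable def H11 (n : ℕ) : ℚ[X] :=
  (Matrix.of fun i j : Fin (n + 1) =>
    if j.val = n then a (i.val + n + 1)
    else if j.val = n - 1 then a (i.val + n)
    else a (i.val + j.val)).det

set_option linter.unusedSectionVars false

open Matrix

namespace HankelAux


variable {R : Type*} [CommRing R]

def hM (b : ℕ → R) (n : ℕ) : Matrix (Fin (n+1)) (Fin (n+1)) R :=
  Matrix.of fun i j => b (i.val + j.val)

def H0g (b : ℕ → R) (n : ℕ) : R :=
  (Matrix.of fun i j : Fin (n + 1) => b (i.val + j.val)).det

def H1g (b : ℕ → R) (n : ℕ) : R :=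
  (Matrix.of fun i j : Fin (n + 1) =>
    if j.val = n then b (i.val + n + 1) else b (i.val + j.val)).det

def H2g (b : ℕ → R) (n : ℕ) : R :=
  (Matrix.of fun i j : Fin (n + 1) =>
    if j.val = n then b (i.val + n + 2) else b (i.val + j.val)).det

def H11g (b : ℕ → R) (n : ℕ) : R :=
  (Matrix.of fun i j : Fin (n + 1) =>
    if j.val = n then b (i.val + n + 1)
    else if j.val = n - 1 then b (i.val + n)
    else b (i.val + j.val)).det

lemma H0g_eq (b : ℕ → R) (n : ℕ) : H0g b n = (hM b n).det := rfl

section helpers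

variable {n : Type*} [DecidableEq n] [Fintype n]

lemma det_updateColumn_zero (A : Matrix n n R) (j : n) :
    (A.updateCol j (fun _ => (0:R))).det = 0 := by
  have h := Matrix.det_updateCol_smul A j 0 (fun _ => (0:R))
  simpa [Pi.zero_def] using h

lemma det_updateColumn_fsum {ι : Type*} (A : Matrix n n R) (j : n) (s : Finset ι)
    (f : ι → n → R) :
    (A.updateCol j (fun k => ∑ i ∈ s, f i k)).det
      = ∑ i ∈ s, (A.updateCol j (f i)).det := by
  classical
  induction s using Finset.induction_on with
  | empty => simpa using det_updateColumn_zero A j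
  | @insert a s ha ih =>
    rw [Finset.sum_insert ha]
    have h : (fun k => ∑ i ∈ insert a s, f i k)
        = (f a) + (fun k => ∑ i ∈ s, f i k) := by
      funext k; rw [Finset.sum_insert ha]; rfl
    rw [h, Matrix.det_updateCol_add, ih]

end helpers

lemma det_updateColumn_single (b : ℕ → R) (N : ℕ) :
    ((hM b (N+1)).updateCol (Fin.last (N+1)) (Pi.single (Fin.last (N+1)) (1:R))).det
      = H0g b N := by
  rw [Matrix.det_succ_column _ (Fin.last (N+1))]
  rw [Finset.sum_eq_single (Fin.last (N+1))]
  · rw [Matrix.updateCol_self]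
    rw [Pi.single_eq_same]
    have he : ((-1 : R) ^ ((Fin.last (N+1) : Fin (N+2)).val + (Fin.last (N+1) : Fin (N+2)).val : ℕ)) = 1 :=
      Even.neg_one_pow ⟨N+1, rfl⟩
    rw [he, one_mul, one_mul]
    have : ((hM b (N+1)).updateCol (Fin.last (N+1)) (Pi.single (Fin.last (N+1)) (1:R))).submatrix
        (Fin.last (N+1)).succAbove (Fin.last (N+1)).succAbove
        = Matrix.of fun i j : Fin (N + 1) => b (i.val + j.val) := by
      ext i j
      simp only [Fin.succAbove_last, Matrix.submatrix_apply]
      rw [Matrix.updateCol_ne (Fin.castSucc_lt_last j).ne]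
      rfl
    rw [this]
    rfl
  · intro i _ hi
    rw [Matrix.updateCol_self, Pi.single_eq_of_ne hi, mul_zero, zero_mul]
  · intro h; exact absurd (Finset.mem_univ _) h

lemma of_ite_eq_update (b : ℕ → R) (N : ℕ) (c : Fin (N+1) → R) :
    (Matrix.of fun i j : Fin (N + 1) => if j.val = N then c i else b (i.val + j.val))
      = (hM b N).updateCol (Fin.last N) c := by
  ext i j
  rw [Matrix.updateCol_apply]
  by_cases h : j = Fin.last N
  · subst h; simp
  · rw [Matrix.of_apply, if_neg (show (j:ℕ) ≠ N from fun hv => h (Fin.ext hv)), if_neg h]; rfl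

lemma of_ite2_eq_update (b : ℕ → R) (N : ℕ) (c d : Fin (N+2) → R) :
    (Matrix.of fun i j : Fin (N + 2) => if j.val = N+1 then c i
      else if j.val = N then d i else b (i.val + j.val))
      = ((hM b (N+1)).updateCol (Fin.castSucc (Fin.last N)) d).updateCol
          (Fin.last (N+1)) c := by
  ext i j
  rw [Matrix.updateCol_apply, Matrix.updateCol_apply, Matrix.of_apply]
  by_cases h : j = Fin.last (N+1)
  · subst h; simp
  · rw [if_neg (show (j:ℕ) ≠ N+1 from fun hv => h (Fin.ext hv)), if_neg h]
    by_cases h2 : j = Fin.castSucc (Fin.last N)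
    · subst h2; simp
    · rw [if_neg (show (j:ℕ) ≠ N from fun hv => h2 (Fin.ext hv)), if_neg h2]; rfl

lemma key (b : ℕ → R) (m : ℕ) (α : Fin (m+2) → R) (ε : R)
    (hα : ∀ i : Fin (m+2), b (i.val + (m+1) + 1) = ∑ j : Fin (m+2), α j * b (i.val + j.val))
    (hε : b (2*m+4) = (∑ j : Fin (m+2), α j * b (m + 2 + j.val)) + ε) :
    H0g b m * H0g b (m+2)
      = H0g b (m+1) * H2g b (m+1) + H0g b (m+1) * H11g b (m+1) - (H1g b (m+1))^2 := by
  have hpl : Fin.castSucc (Fin.last m) ≠ Fin.last (m+1) := (Fin.castSucc_lt_last _).ne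
  -- S1
  have hS1 : H1g b (m+1) = α (Fin.last (m+1)) * H0g b (m+1) := by
    have e1 : H1g b (m+1)
        = ((hM b (m+1)).updateCol (Fin.last (m+1)) (fun i => b (i.val + (m+1) + 1))).det :=
      congrArg Matrix.det (of_ite_eq_update b (m+1) _)
    have hcol : (fun i : Fin (m+2) => b (i.val + (m+1) + 1))
        = fun i => ∑ j : Fin (m+2), α j • (hM b (m+1)) i j := by
      funext i; rw [hα i]; rfl
    rw [e1, hcol, Matrix.det_updateCol_sum, smul_eq_mul, H0g_eq]
  -- S2
  have hS2 : H11g b (m+1) = -(α (Fin.castSucc (Fin.last m)) * H0g b (m+1)) := by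
    have e2 : H11g b (m+1)
        = (((hM b (m+1)).updateCol (Fin.castSucc (Fin.last m))
              (fun i => b (i.val + (m+1)))).updateCol
            (Fin.last (m+1)) (fun i => b (i.val + (m+1) + 1))).det :=
      congrArg Matrix.det (of_ite2_eq_update b m _ _)
    have hcol : (fun i : Fin (m+2) => b (i.val + (m+1) + 1))
        = fun k : Fin (m+2) => ∑ j : Fin (m+2), α j * b (k.val + j.val) := by
      funext i; exact hα i
    rw [e2, hcol, det_updateColumn_fsum _ _ Finset.univ
      (fun (j : Fin (m+2)) (k : Fin (m+2)) => α j * b (k.val + j.val))]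
    have hterm : ∀ j : Fin (m+2),
        (((hM b (m+1)).updateCol (Fin.castSucc (Fin.last m))
            (fun i => b (i.val + (m+1)))).updateCol (Fin.last (m+1))
          (fun k => α j * b (k.val + j.val))).det
        = if j = Fin.castSucc (Fin.last m)
            then α (Fin.castSucc (Fin.last m)) * -(hM b (m+1)).det else 0 := by
      intro j
      have hsm : (((hM b (m+1)).updateCol (Fin.castSucc (Fin.last m))
            (fun i => b (i.val + (m+1)))).updateCol (Fin.last (m+1))
          (fun k => α j * b (k.val + j.val))).det
          = α j * (((hM b (m+1)).updateCol (Fin.castSucc (Fin.last m))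
              (fun i => b (i.val + (m+1)))).updateCol (Fin.last (m+1))
            (fun k => b (k.val + j.val))).det :=
        Matrix.det_updateCol_smul _ _ (α j) _
      rw [hsm]
      by_cases hjp : j = Fin.castSucc (Fin.last m)
      · rw [if_pos hjp, hjp]
        have hswap : (((hM b (m+1)).updateCol (Fin.castSucc (Fin.last m))
              (fun i => b (i.val + (m+1)))).updateCol (Fin.last (m+1))
            (fun k => b (k.val + (Fin.castSucc (Fin.last m) : Fin (m+2)).val)))
            = (hM b (m+1)).submatrix id
                (Equiv.swap (Fin.castSucc (Fin.last m)) (Fin.last (m+1))) := by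
          ext i j'
          rw [Matrix.submatrix_apply, Matrix.updateCol_apply, Matrix.updateCol_apply]
          by_cases h1 : j' = Fin.last (m+1)
          · rw [if_pos h1, h1, Equiv.swap_apply_right]; rfl
          · rw [if_neg h1]
            by_cases h2 : j' = Fin.castSucc (Fin.last m)
            · rw [if_pos h2, h2, Equiv.swap_apply_left]; rfl
            · rw [if_neg h2, Equiv.swap_apply_of_ne_of_ne h2 h1]; rfl
        rw [hswap, Matrix.det_permute', Equiv.Perm.sign_swap hpl]
        simp
      · rw [if_neg hjp]
        by_cases hjl : j = Fin.last (m+1)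
        · rw [hjl]
          have hcl : (fun k : Fin (m+2) => b (k.val + (Fin.last (m+1) : Fin (m+2)).val))
              = fun k => ((hM b (m+1)).updateCol (Fin.castSucc (Fin.last m))
                  (fun i => b (i.val + (m+1)))) k (Fin.last (m+1)) := by
            funext k
            rw [Matrix.updateCol_ne hpl.symm]
            rfl
          rw [hcl, Matrix.updateCol_eq_self]
          have hz : ((hM b (m+1)).updateCol (Fin.castSucc (Fin.last m))
              (fun i => b (i.val + (m+1)))).det = 0 := by
            apply Matrix.det_zero_of_column_eq hpl
            intro k
            rw [Matrix.updateCol_self, Matrix.updateCol_ne hpl.symm]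
            rfl
          rw [hz, mul_zero]
        · have hz : (((hM b (m+1)).updateCol (Fin.castSucc (Fin.last m))
              (fun i => b (i.val + (m+1)))).updateCol (Fin.last (m+1))
            (fun k => b (k.val + j.val))).det = 0 := by
            apply Matrix.det_zero_of_column_eq hjl
            intro k
            rw [Matrix.updateCol_ne hjl, Matrix.updateCol_ne hjp,
              Matrix.updateCol_self]
            rfl
          rw [hz, mul_zero]
    rw [Finset.sum_congr rfl (fun j _ => hterm j), Finset.sum_ite_eq' Finset.univ _ _,
      if_pos (Finset.mem_univ _), H0g_eq]
    ring
  -- S3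
  have hS3 : H2g b (m+1) = α (Fin.castSucc (Fin.last m)) * H0g b (m+1)
      + α (Fin.last (m+1)) * H1g b (m+1) + ε * H0g b m := by
    have e3 : H2g b (m+1)
        = ((hM b (m+1)).updateCol (Fin.last (m+1)) (fun i => b (i.val + (m+1) + 2))).det :=
      congrArg Matrix.det (of_ite_eq_update b (m+1) _)
    have hcol : (fun i : Fin (m+2) => b (i.val + (m+1) + 2))
        = (fun k : Fin (m+2) => ∑ j : Fin (m+2), α j * b (k.val + j.val + 1))
          + ε • (Pi.single (Fin.last (m+1)) (1:R) : Fin (m+2) → R) := by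
      funext i
      simp only [Pi.add_apply, Pi.smul_apply, smul_eq_mul]
      by_cases hi : i = Fin.last (m+1)
      · rw [hi, Pi.single_eq_same, mul_one]
        have h1 : (Fin.last (m+1) : Fin (m+2)).val + (m+1) + 2 = 2*m+4 := by
          simp only [Fin.val_last]; omega
        rw [h1, hε]
        refine congrArg (· + ε) (Finset.sum_congr rfl fun j _ => ?_)
        have h2 : m + 2 + j.val = (Fin.last (m+1) : Fin (m+2)).val + j.val + 1 := by
          simp only [Fin.val_last]; omega
        rw [h2]
      · rw [Pi.single_eq_of_ne hi, mul_zero, add_zero]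
        have hiv : i.val < m + 1 := Fin.val_lt_last hi
        have h2 : b ((i.val + 1) + (m+1) + 1)
            = ∑ j : Fin (m+2), α j * b ((i.val + 1) + j.val) := hα ⟨i.val + 1, by omega⟩
        have h3 : i.val + (m+1) + 2 = (i.val + 1) + (m+1) + 1 := by omega
        rw [h3, h2]
        refine Finset.sum_congr rfl fun j _ => ?_
        have h4 : i.val + 1 + j.val = i.val + j.val + 1 := by omega
        rw [h4]
    rw [e3, hcol, Matrix.det_updateCol_add,
      det_updateColumn_fsum (hM b (m+1)) (Fin.last (m+1)) Finset.univ
        (fun (j : Fin (m+2)) (k : Fin (m+2)) => α j * b (k.val + j.val + 1))]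
    have hterm : ∀ j : Fin (m+2),
        ((hM b (m+1)).updateCol (Fin.last (m+1)) (fun k => α j * b (k.val + j.val + 1))).det
          = (if j = Fin.castSucc (Fin.last m)
              then α (Fin.castSucc (Fin.last m)) * H0g b (m+1) else 0)
            + (if j = Fin.last (m+1) then α (Fin.last (m+1)) * H1g b (m+1) else 0) := by
      intro j
      have hsm : ((hM b (m+1)).updateCol (Fin.last (m+1))
            (fun k => α j * b (k.val + j.val + 1))).det
          = α j * ((hM b (m+1)).updateCol (Fin.last (m+1))
              (fun k => b (k.val + j.val + 1))).det :=
        Matrix.det_updateCol_smul _ _ (α j) _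
      rw [hsm]
      by_cases hjp : j = Fin.castSucc (Fin.last m)
      · rw [if_pos hjp, if_neg (hjp ▸ hpl), add_zero, hjp]
        have hcl : (fun k : Fin (m+2) => b (k.val + (Fin.castSucc (Fin.last m) : Fin (m+2)).val + 1))
            = fun k => (hM b (m+1)) k (Fin.last (m+1)) := by
          funext k
          have h5 : k.val + (Fin.castSucc (Fin.last m) : Fin (m+2)).val + 1
              = k.val + (Fin.last (m+1) : Fin (m+2)).val := by
            simp only [Fin.coe_castSucc, Fin.val_last]; omega
          rw [h5]; rfl
        rw [hcl, Matrix.updateCol_eq_self, H0g_eq]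
      · rw [if_neg hjp]
        by_cases hjl : j = Fin.last (m+1)
        · rw [if_pos hjl, zero_add, hjl]
          have hcl : (fun k : Fin (m+2) => b (k.val + (Fin.last (m+1) : Fin (m+2)).val + 1))
              = fun k : Fin (m+2) => b (k.val + (m+1) + 1) := by
            funext k; simp only [Fin.val_last]
          rw [hcl]
          rw [(congrArg Matrix.det (of_ite_eq_update b (m+1)
            (fun i : Fin (m+2) => b (i.val + (m+1) + 1)))).symm]
          rfl
        · rw [if_neg hjl, add_zero]
          have hjv : j.val < m := by
            have h6 := j.isLt
            have h7 : j.val ≠ m := fun h => hjp (Fin.ext (by simpa using h))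
            have h8 : j.val ≠ m + 1 := fun h => hjl (Fin.ext (by simpa using h))
            omega
          have hz : ((hM b (m+1)).updateCol (Fin.last (m+1))
              (fun k => b (k.val + j.val + 1))).det = 0 := by
            apply Matrix.det_zero_of_column_eq
              (show (⟨j.val + 1, by omega⟩ : Fin (m+2)) ≠ Fin.last (m+1) from
                fun h => by
                  have := Fin.ext_iff.mp h
                  simp only [Fin.val_last] at this; omega)
            intro k
            rw [Matrix.updateCol_ne (show (⟨j.val + 1, by omega⟩ : Fin (m+2)) ≠ Fin.last (m+1) from
                fun h => by
                  have := Fin.ext_iff.mp h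
                  simp only [Fin.val_last] at this; omega),
              Matrix.updateCol_self]
            rfl
          rw [hz, mul_zero]
    rw [Finset.sum_congr rfl (fun j _ => hterm j), Finset.sum_add_distrib,
      Finset.sum_ite_eq' Finset.univ _ _, Finset.sum_ite_eq' Finset.univ _ _,
      if_pos (Finset.mem_univ _), if_pos (Finset.mem_univ _)]
    have hsing : ((hM b (m+1)).updateCol (Fin.last (m+1))
        (ε • (Pi.single (Fin.last (m+1)) (1:R) : Fin (m+2) → R))).det = ε * H0g b m := by
      rw [Matrix.det_updateCol_smul, det_updateColumn_single]
    rw [hsing]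
  -- S4
  have hS4 : H0g b (m+2) = ε * H0g b (m+1) := by
    have hc : (fun i : Fin (m+3) => (hM b (m+2)) i (Fin.last (m+2)))
        = (fun k : Fin (m+3) => ∑ j : Fin (m+2), α j * b (k.val + j.val))
          + ε • (Pi.single (Fin.last (m+2)) (1:R) : Fin (m+3) → R) := by
      funext i
      simp only [Pi.add_apply, Pi.smul_apply, smul_eq_mul]
      by_cases hi : i = Fin.last (m+2)
      · rw [hi, Pi.single_eq_same, mul_one]
        have h1 : (hM b (m+2)) (Fin.last (m+2)) (Fin.last (m+2)) = b (2*m+4) := by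
          show b ((m+2) + (m+2)) = b (2*m+4)
          congr 1; omega
        rw [h1, hε]
        refine congrArg (· + ε) (Finset.sum_congr rfl fun j _ => ?_)
        have h2 : m + 2 + j.val = (Fin.last (m+2) : Fin (m+3)).val + j.val := by
          simp only [Fin.val_last]
        rw [h2]
      · rw [Pi.single_eq_of_ne hi, mul_zero, add_zero]
        have hiv : i.val < m + 2 := Fin.val_lt_last hi
        have h2 : b (i.val + (m+1) + 1) = ∑ j : Fin (m+2), α j * b (i.val + j.val) :=
          hα ⟨i.val, hiv⟩
        have h3 : (hM b (m+2)) i (Fin.last (m+2)) = b (i.val + (m+1) + 1) := rfl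
        rw [h3, h2]
    have e4 : H0g b (m+2) = ((hM b (m+2)).updateCol (Fin.last (m+2))
        ((fun k : Fin (m+3) => ∑ j : Fin (m+2), α j * b (k.val + j.val))
          + ε • (Pi.single (Fin.last (m+2)) (1:R) : Fin (m+3) → R))).det := by
      rw [← hc, Matrix.updateCol_eq_self]; rfl
    rw [e4, Matrix.det_updateCol_add,
      det_updateColumn_fsum (hM b (m+2)) (Fin.last (m+2)) Finset.univ
        (fun (j : Fin (m+2)) (k : Fin (m+3)) => α j * b (k.val + j.val))]
    have hterm : ∀ j : Fin (m+2),
        ((hM b (m+2)).updateCol (Fin.last (m+2)) (fun k => α j * b (k.val + j.val))).det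
          = 0 := by
      intro j
      have hsm : ((hM b (m+2)).updateCol (Fin.last (m+2))
            (fun k => α j * b (k.val + j.val))).det
          = α j * ((hM b (m+2)).updateCol (Fin.last (m+2))
              (fun k => b (k.val + j.val))).det :=
        Matrix.det_updateCol_smul _ _ (α j) _
      rw [hsm]
      have hne : (⟨j.val, by omega⟩ : Fin (m+3)) ≠ Fin.last (m+2) := by
        intro h
        have := Fin.ext_iff.mp h
        simp only [Fin.val_last] at this
        have := j.isLt
        omega
      have hz : ((hM b (m+2)).updateCol (Fin.last (m+2))
          (fun k => b (k.val + j.val))).det = 0 := by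
        apply Matrix.det_zero_of_column_eq hne
        intro k
        rw [Matrix.updateCol_ne hne, Matrix.updateCol_self]
        rfl
      rw [hz, mul_zero]
    rw [Finset.sum_congr rfl (fun j _ => hterm j), Finset.sum_const_zero, zero_add]
    have hsing : ((hM b (m+2)).updateCol (Fin.last (m+2))
        (ε • (Pi.single (Fin.last (m+2)) (1:R) : Fin (m+3) → R))).det = ε * H0g b (m+1) := by
      rw [Matrix.det_updateCol_smul, det_updateColumn_single]
    rw [hsing]
  -- conclusion
  rw [hS4, hS3, hS2, hS1]
  ring



open MvPolynomial in
lemma prodX_eq {ι : Type*} (s : Finset ι) (f : ι → ℕ) :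
    (∏ i ∈ s, (X (f i) : MvPolynomial ℕ ℤ))
      = monomial (∑ i ∈ s, Finsupp.single (f i) 1) 1 := by
  classical
  induction s using Finset.induction_on with
  | empty => simp [monomial_zero']
  | @insert a s ha ih =>
    rw [Finset.prod_insert ha, Finset.sum_insert ha, ih]
    rw [show (X (f a) : MvPolynomial ℕ ℤ) = monomial (Finsupp.single (f a) 1) 1 from rfl]
    rw [monomial_mul, mul_one]

lemma genHankel_ne_zero (N : ℕ) :
    (Matrix.of fun i j : Fin (N+1) =>
      (MvPolynomial.X (i.val + j.val) : MvPolynomial ℕ ℤ)).det ≠ 0 := by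
  classical
  set m0 : ℕ →₀ ℕ := ∑ i : Fin (N+1), Finsupp.single (i.val + i.val) 1 with hm0
  have crux : ∀ σ : Equiv.Perm (Fin (N+1)),
      ((∑ i : Fin (N+1), Finsupp.single ((σ i).val + i.val) 1) = m0) ↔ σ = 1 := by
    intro σ
    constructor
    · intro h
      have hcount : ∀ t : ℕ,
          (∑ i : Fin (N+1), if (σ i).val + i.val = t then (1:ℕ) else 0)
            = ∑ i : Fin (N+1), if i.val + i.val = t then (1:ℕ) else 0 := by
        intro t
        have h2 := congrArg (fun f : ℕ →₀ ℕ => f t) h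
        rw [hm0] at h2
        simpa [Finsupp.finset_sum_apply, Finsupp.single_apply] using h2
      have hfix : ∀ k : ℕ, ∀ hk : k < N+1, σ ⟨k, hk⟩ = ⟨k, hk⟩ := by
        intro k
        induction k using Nat.strong_induction_on with
        | _ k ih =>
          intro hk
          have hex : ∃ i : Fin (N+1), (σ i).val + i.val = k + k := by
            by_contra hno
            push_neg at hno
            have h1 : (∑ i : Fin (N+1), if (σ i).val + i.val = k+k then (1:ℕ) else 0) = 0 :=
              Finset.sum_eq_zero fun i _ => by rw [if_neg (hno i)]
            have h3 := hcount (k+k)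
            rw [h1] at h3
            have h4 := Finset.sum_eq_zero_iff.mp h3.symm ⟨k, hk⟩ (Finset.mem_univ _)
            simp at h4
          obtain ⟨i, hi⟩ := hex
          have hile : k ≤ i.val := by
            by_contra hlt
            push_neg at hlt
            have h5 := ih i.val hlt i.isLt
            have h6 : σ i = i := by simpa using h5
            have h7 : (σ i).val = i.val := congrArg Fin.val h6
            omega
          have hsle : k ≤ (σ i).val := by
            by_contra hlt
            push_neg at hlt
            have h5 := ih (σ i).val hlt (σ i).isLt
            have h6 : σ (σ i) = σ i := by simpa using h5
            have h7 : σ i = i := σ.injective h6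
            have h8 : (σ i).val = i.val := congrArg Fin.val h7
            omega
          have h9 : i = ⟨k, hk⟩ := Fin.ext (show i.val = k by omega)
          rw [← h9]
          exact Fin.ext (show (σ i).val = i.val by omega)
      exact Equiv.ext fun i => by simpa using hfix i.val i.isLt
    · intro h
      subst h
      simp [hm0]
  have hcoeff : MvPolynomial.coeff m0 ((Matrix.of fun i j : Fin (N+1) =>
      (MvPolynomial.X (i.val + j.val) : MvPolynomial ℕ ℤ)).det) = 1 := by
    rw [Matrix.det_apply, MvPolynomial.coeff_sum]
    have hterm : ∀ σ : Equiv.Perm (Fin (N+1)),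
        MvPolynomial.coeff m0 (Equiv.Perm.sign σ • ∏ i : Fin (N+1),
          (Matrix.of fun i j : Fin (N+1) =>
            (MvPolynomial.X (i.val + j.val) : MvPolynomial ℕ ℤ)) (σ i) i)
          = if σ = 1 then (1:ℤ) else 0 := by
      intro σ
      have h1 : (∏ i : Fin (N+1),
          (Matrix.of fun i j : Fin (N+1) =>
            (MvPolynomial.X (i.val + j.val) : MvPolynomial ℕ ℤ)) (σ i) i)
          = MvPolynomial.monomial (∑ i : Fin (N+1), Finsupp.single ((σ i).val + i.val) 1) 1 :=
        prodX_eq Finset.univ _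
      rw [h1, MvPolynomial.coeff_smul, MvPolynomial.coeff_monomial]
      rcases eq_or_ne σ 1 with hσ | hσ
      · rw [if_pos ((crux σ).mpr hσ), if_pos hσ, hσ]
        simp
      · rw [if_neg (fun hc => hσ ((crux σ).mp hc)), if_neg hσ, smul_zero]
    calc (∑ σ : Equiv.Perm (Fin (N+1)), MvPolynomial.coeff m0 (Equiv.Perm.sign σ •
            ∏ i : Fin (N+1), (Matrix.of fun i j : Fin (N+1) =>
              (MvPolynomial.X (i.val + j.val) : MvPolynomial ℕ ℤ)) (σ i) i))
        = ∑ σ : Equiv.Perm (Fin (N+1)), if σ = 1 then (1:ℤ) else 0 :=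
          Finset.sum_congr rfl fun σ _ => hterm σ
      _ = 1 := by
          rw [Finset.sum_ite_eq' Finset.univ (1 : Equiv.Perm (Fin (N+1))) (fun _ => (1:ℤ))]
          simp
  intro hdet
  rw [hdet] at hcoeff
  simp at hcoeff


section Transfer

variable {R : Type*} [CommRing R] {S : Type*} [CommRing S]

lemma H0g_map (f : R →+* S) (b : ℕ → R) (k : ℕ) :
    H0g (fun c => f (b c)) k = f (H0g b k) := by
  unfold H0g
  rw [RingHom.map_det]
  rfl

lemma H1g_map (f : R →+* S) (b : ℕ → R) (k : ℕ) :
    H1g (fun c => f (b c)) k = f (H1g b k) := by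
  unfold H1g
  rw [RingHom.map_det]
  congr 1
  ext i j
  simp [RingHom.mapMatrix_apply, Matrix.map_apply, apply_ite f]

lemma H2g_map (f : R →+* S) (b : ℕ → R) (k : ℕ) :
    H2g (fun c => f (b c)) k = f (H2g b k) := by
  unfold H2g
  rw [RingHom.map_det]
  congr 1
  ext i j
  simp [RingHom.mapMatrix_apply, Matrix.map_apply, apply_ite f]

lemma H11g_map (f : R →+* S) (b : ℕ → R) (k : ℕ) :
    H11g (fun c => f (b c)) k = f (H11g b k) := by
  unfold H11g
  rw [RingHom.map_det]
  congr 1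
  ext i j
  simp [RingHom.mapMatrix_apply, Matrix.map_apply, apply_ite f]

end Transfer

noncomputable section Generic

open MvPolynomial

abbrev P : Type := MvPolynomial ℕ ℤ
abbrev F : Type := FractionRing P

def bF : ℕ → F := fun c => algebraMap P F (X c)

lemma generic_identity (m : ℕ) :
    H0g (X : ℕ → P) m * H0g X (m+2)
      = H0g X (m+1) * H2g X (m+1) + H0g X (m+1) * H11g X (m+1) - (H1g X (m+1))^2 := by
  have hinj : Function.Injective (algebraMap P F) := IsFractionRing.injective P F
  have hmap : (Matrix.of fun i j : Fin (m+2) => bF (i.val + j.val))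
      = ((algebraMap P F : P →+* F)).mapMatrix
          (Matrix.of fun i j : Fin (m+2) => (X (i.val + j.val) : P)) := rfl
  have hdet0 : (Matrix.of fun i j : Fin (m+2) => bF (i.val + j.val)).det ≠ 0 := by
    intro h
    rw [hmap, ← RingHom.map_det] at h
    exact genHankel_ne_zero (m+1) (hinj (h.trans (map_zero _).symm))
  have hU : IsUnit (Matrix.of fun i j : Fin (m+2) => bF (i.val + j.val)).det :=
    isUnit_iff_ne_zero.mpr hdet0
  set MF : Matrix (Fin (m+2)) (Fin (m+2)) F := Matrix.of fun i j => bF (i.val + j.val) with hMF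
  set αv : Fin (m+2) → F := MF⁻¹.mulVec (fun i => bF (i.val + (m+1) + 1)) with hαv
  have hsolve : MF.mulVec αv = fun i => bF (i.val + (m+1) + 1) := by
    rw [hαv, Matrix.mulVec_mulVec, Matrix.mul_nonsing_inv _ hU, Matrix.one_mulVec]
  have hα : ∀ i : Fin (m+2), bF (i.val + (m+1) + 1)
      = ∑ j : Fin (m+2), αv j * bF (i.val + j.val) := by
    intro i
    have h1 : ∑ j : Fin (m+2), MF i j * αv j = bF (i.val + (m+1) + 1) := congrFun hsolve i
    rw [← h1]
    exact Finset.sum_congr rfl fun j _ => mul_comm _ _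
  have hε : bF (2*m+4) = (∑ j : Fin (m+2), αv j * bF (m + 2 + j.val))
      + (bF (2*m+4) - ∑ j : Fin (m+2), αv j * bF (m + 2 + j.val)) := by ring
  have hkey := key bF m αv
    (bF (2*m+4) - ∑ j : Fin (m+2), αv j * bF (m + 2 + j.val)) hα hε
  apply hinj
  have t0 : ∀ k, H0g bF k = algebraMap P F (H0g (X : ℕ → P) k) := fun k =>
    H0g_map (algebraMap P F : P →+* F) X k
  have t1 : H1g bF (m+1) = algebraMap P F (H1g (X : ℕ → P) (m+1)) :=
    H1g_map (algebraMap P F : P →+* F) X (m+1)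
  have t2 : H2g bF (m+1) = algebraMap P F (H2g (X : ℕ → P) (m+1)) :=
    H2g_map (algebraMap P F : P →+* F) X (m+1)
  have t11 : H11g bF (m+1) = algebraMap P F (H11g (X : ℕ → P) (m+1)) :=
    H11g_map (algebraMap P F : P →+* F) X (m+1)
  simp only [_root_.map_mul, _root_.map_add, _root_.map_sub, _root_.map_pow]
  rw [← t0, ← t0, ← t0, ← t1, ← t2, ← t11]
  exact hkey

end Generic

end HankelAux

open HankelAux in
theorem stmt_7 (n : ℕ) (hn : 1 ≤ n) :
    H0 (n - 1) * H0 (n + 1) = H0 n * H2 n + H0 n * H11 n - (H1 n) ^ 2 := by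
  obtain ⟨m, rfl⟩ : ∃ m, n = m + 1 := ⟨n - 1, by omega⟩
  have gid := generic_identity m
  have hψ := congrArg (MvPolynomial.aeval a : MvPolynomial ℕ ℤ →ₐ[ℤ] ℚ[X]).toRingHom gid
  set ψ : MvPolynomial ℕ ℤ →+* ℚ[X] :=
    (MvPolynomial.aeval a : MvPolynomial ℕ ℤ →ₐ[ℤ] ℚ[X]).toRingHom with hψdef
  simp only [_root_.map_mul, _root_.map_add, _root_.map_sub, _root_.map_pow] at hψ
  have hfun : (fun c => ψ (MvPolynomial.X c)) = a := by
    funext c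
    simp [hψdef]
  have t0 : ∀ k, ψ (H0g (MvPolynomial.X : ℕ → MvPolynomial ℕ ℤ) k) = H0g a k := fun k => by
    rw [← H0g_map ψ MvPolynomial.X k, hfun]
  have t1 : ψ (H1g (MvPolynomial.X : ℕ → MvPolynomial ℕ ℤ) (m+1)) = H1g a (m+1) := by
    rw [← H1g_map ψ MvPolynomial.X (m+1), hfun]
  have t2 : ψ (H2g (MvPolynomial.X : ℕ → MvPolynomial ℕ ℤ) (m+1)) = H2g a (m+1) := by
    rw [← H2g_map ψ MvPolynomial.X (m+1), hfun]
  have t11 : ψ (H11g (MvPolynomial.X : ℕ → MvPolynomial ℕ ℤ) (m+1)) = H11g a (m+1) := by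
    rw [← H11g_map ψ MvPolynomial.X (m+1), hfun]
  rw [t0 m, t0 (m+2), t0 (m+1), t1, t2, t11] at hψ
  exact hψ
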